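/- Let π₀, π₁ : ω → ω×ω be bijections such that |π₀⁻¹[Z_i] ∩ π₁⁻¹[Z_j]| = ω for all i,j ∈ ω, where Z_i = {i}×ω. Define filters G_k on ω by M ∈ G_k iff π_k[M] ∈ N₂ (k ∈ {0,1}), where N₂ is the filter on ω×ω with M' ∈ N₂ iff for all but finitely many i, the section {n : (i,n) ∈ M'} is cofinite. Then G₀ ∩ G₁ does not contain an isomorphic copy of N₂: there is no bijection σ : ω×ω → ω with σ[A] ∈ G₀ ∩ G₁ for every A ∈ N₂. -/

import Mathlib

def N2 : Set (Set (ℕ × ℕ)) :=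
  {M : Set (ℕ × ℕ) | {i : ℕ | ¬ {n : ℕ | (i, n) ∉ M}.Finite}.Finite}

lemma aux18 (σ : ℕ × ℕ → ℕ) (hσ : Function.Bijective σ) (π : ℕ ≃ ℕ × ℕ)
    (B : Set (ℕ × ℕ)) (hmem : (⇑π) '' (σ '' Bᶜ) ∈ N2) :
    {i : ℕ | (B ∩ {p : ℕ × ℕ | (π (σ p)).1 = i}).Infinite}.Finite := by
  set f : ℕ × ℕ → ℕ × ℕ := fun p => π (σ p) with hfdef
  have hf : Function.Bijective f := π.bijective.comp hσ
  have himg : (⇑π) '' (σ '' Bᶜ) = (f '' B)ᶜ := by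
    have hcomp : ⇑π ∘ σ = f := rfl
    rw [← Set.image_comp, hcomp, Set.image_compl_eq hf]
  rw [himg] at hmem
  have hmem' : {i : ℕ | ¬ {n : ℕ | (i, n) ∈ f '' B}.Finite}.Finite := by
    have he : {i : ℕ | ¬ {n : ℕ | (i, n) ∈ f '' B}.Finite}
        = {i : ℕ | ¬ {n : ℕ | (i, n) ∉ (f '' B)ᶜ}.Finite} := by
      simp
    rw [he]; exact hmem
  refine hmem'.subset ?_
  intro i hi
  simp only [Set.mem_setOf_eq] at hi ⊢
  have hInj : Set.InjOn (fun p => (f p).2) (B ∩ {p : ℕ × ℕ | (f p).1 = i}) := by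
    intro p hp q hq hpq
    apply hf.injective
    have h1 : (f p).1 = (f q).1 := by
      rw [hp.2, hq.2]
    exact Prod.ext h1 hpq
  have himg2 : (fun p => (f p).2) '' (B ∩ {p : ℕ × ℕ | (f p).1 = i})
      ⊆ {n : ℕ | (i, n) ∈ f '' B} := by
    rintro n ⟨p, hp, rfl⟩
    exact ⟨p, hp.1, by rw [← hp.2]⟩
  exact Set.Infinite.mono himg2 (hi.image hInj)

/-- For bijections π₀, π₁ : ω → ω×ω whose preimages of any two columns intersect
in an infinite set, the intersection of the pullback filters G₀ ∩ G₁ contains no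
isomorphic copy of N₂. -/
theorem stmt_18 (π0 π1 : ℕ ≃ ℕ × ℕ)
    (hπ : ∀ i j : ℕ, {m : ℕ | (π0 m).1 = i ∧ (π1 m).1 = j}.Infinite)
    (G0 G1 : Set (Set ℕ))
    (hG0 : G0 = {M : Set ℕ | π0 '' M ∈ N2})
    (hG1 : G1 = {M : Set ℕ | π1 '' M ∈ N2}) :
    ¬ ∃ σ : ℕ × ℕ → ℕ, Function.Bijective σ ∧
      ∀ A ∈ N2, σ '' A ∈ G0 ∧ σ '' A ∈ G1 := by
  subst hG0 hG1
  rintro ⟨σ, hσ, H⟩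
  set f0 : ℕ × ℕ → ℕ × ℕ := fun p => π0 (σ p) with hf0
  set f1 : ℕ × ℕ → ℕ × ℕ := fun p => π1 (σ p) with hf1
  -- key consequences of the embedding hypothesis
  have hcompl : ∀ B : Set (ℕ × ℕ), {i : ℕ | ¬ {n : ℕ | (i, n) ∈ B}.Finite}.Finite →
      Bᶜ ∈ N2 := by
    intro B hB
    simpa [N2] using hB
  have key0 : ∀ B : Set (ℕ × ℕ), {i : ℕ | ¬ {n : ℕ | (i, n) ∈ B}.Finite}.Finite →
      {i : ℕ | (B ∩ {p : ℕ × ℕ | (f0 p).1 = i}).Infinite}.Finite := by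
    intro B hB
    exact aux18 σ hσ π0 B ((H Bᶜ (hcompl B hB)).1)
  have key1 : ∀ B : Set (ℕ × ℕ), {i : ℕ | ¬ {n : ℕ | (i, n) ∈ B}.Finite}.Finite →
      {j : ℕ | (B ∩ {p : ℕ × ℕ | (f1 p).1 = j}).Infinite}.Finite := by
    intro B hB
    exact aux18 σ hσ π1 B ((H Bᶜ (hcompl B hB)).2)
  -- the double intersections are infinite
  have hE : ∀ i j : ℕ, {p : ℕ × ℕ | (f0 p).1 = i ∧ (f1 p).1 = j}.Infinite := by
    intro i j
    have h1 := hπ i j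
    have heq : {p : ℕ × ℕ | (f0 p).1 = i ∧ (f1 p).1 = j}
        = σ ⁻¹' {m : ℕ | (π0 m).1 = i ∧ (π1 m).1 = j} := rfl
    rw [heq]
    exact h1.preimage (by rw [Set.range_eq_univ.mpr hσ.surjective]; exact Set.subset_univ _)
  set S : Set ℕ := {i : ℕ | (Prod.fst '' {p : ℕ × ℕ | (f0 p).1 = i}).Infinite} with hSdef
  by_cases hS : S.Infinite
  · -- Case 1: build B with at most finitely many points in each row,
    -- infinite in D_i for each i ∈ S
    have hx : ∀ i n : ℕ, ∃ p : ℕ × ℕ, i ∈ S → ((f0 p).1 = i ∧ max i n < p.1) := by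
      intro i n
      by_cases hi : i ∈ S
      · obtain ⟨b, hb, hbn⟩ := hi.exists_gt (max i n)
        obtain ⟨p, hp, rfl⟩ := hb
        exact ⟨p, fun _ => ⟨hp, hbn⟩⟩
      · exact ⟨(0, 0), fun h => absurd h hi⟩
    choose x hx using hx
    set B : Set (ℕ × ℕ) := {q | ∃ i ∈ S, ∃ n : ℕ, q = x i n} with hBdef
    have hrows : ∀ r : ℕ, {n : ℕ | (r, n) ∈ B}.Finite := by
      intro r
      have hsub : {n : ℕ | (r, n) ∈ B} ⊆
          (fun im : ℕ × ℕ => (x im.1 im.2).2) '' (Set.Iio r ×ˢ Set.Iio r) := by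
        rintro n ⟨i, hi, m, hq⟩
        have h2 := hx i m hi
        have hr : (x i m).1 = r := by rw [← hq]
        have hn : (x i m).2 = n := by rw [← hq]
        refine ⟨(i, m), ⟨?_, ?_⟩, hn⟩
        · exact lt_of_le_of_lt (le_max_left i m) (hr ▸ h2.2)
        · exact lt_of_le_of_lt (le_max_right i m) (hr ▸ h2.2)
      exact (((Set.finite_Iio r).prod (Set.finite_Iio r)).image _).subset hsub
    have hBfin : {i : ℕ | ¬ {n : ℕ | (i, n) ∈ B}.Finite}.Finite := by
      have he : {i : ℕ | ¬ {n : ℕ | (i, n) ∈ B}.Finite} = ∅ := by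
        ext r
        simp [hrows r]
      rw [he]; exact Set.finite_empty
    have hBig : S ⊆ {i : ℕ | (B ∩ {p : ℕ × ℕ | (f0 p).1 = i}).Infinite} := by
      intro i hi
      have hsub : Set.range (x i) ⊆ B ∩ {p : ℕ × ℕ | (f0 p).1 = i} := by
        rintro q ⟨n, rfl⟩
        exact ⟨⟨i, hi, n, rfl⟩, (hx i n hi).1⟩
      refine Set.Infinite.mono hsub ?_
      intro hfin
      obtain ⟨N, hN⟩ := (hfin.image Prod.fst).bddAbove
      have h1 : (x i N).1 ≤ N := hN ⟨x i N, ⟨N, rfl⟩, rfl⟩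
      have h2 := (hx i N hi).2
      have h3 : N ≤ max i N := le_max_right i N
      omega
    exact hS ((key0 B hBfin).subset hBig)
  · -- Case 2: some D_{i0} has finite projection; pigeonhole on rows
    have hSfin : S.Finite := Set.not_infinite.mp hS
    obtain ⟨i0, hi0⟩ := hSfin.infinite_compl.nonempty
    have hF : (Prod.fst '' {p : ℕ × ℕ | (f0 p).1 = i0}).Finite :=
      Set.not_infinite.mp hi0
    set F : Set ℕ := Prod.fst '' {p : ℕ × ℕ | (f0 p).1 = i0} with hFdef
    have hr : ∀ j : ℕ, ∃ r : ℕ, r ∈ F ∧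
        {p : ℕ × ℕ | ((f0 p).1 = i0 ∧ (f1 p).1 = j) ∧ p.1 = r}.Infinite := by
      intro j
      by_contra hcon
      push_neg at hcon
      have hfin : (⋃ r ∈ F, {p : ℕ × ℕ | ((f0 p).1 = i0 ∧ (f1 p).1 = j) ∧ p.1 = r}).Finite := by
        refine hF.biUnion ?_
        intro r hrF
        exact hcon r hrF
      apply hE i0 j
      refine hfin.subset ?_
      intro p hp
      simp only [Set.mem_setOf_eq] at hp
      exact Set.mem_biUnion ⟨p, hp.1, rfl⟩ ⟨hp, rfl⟩
    choose r hrF hrInf using hr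
    haveI : Finite ↥F := hF.to_subtype
    obtain ⟨y, hy⟩ := Finite.exists_infinite_fiber (fun j : ℕ => (⟨r j, hrF j⟩ : ↥F))
    have hy' : {j : ℕ | r j = (y : ℕ)}.Infinite := by
      have hset : (fun j : ℕ => (⟨r j, hrF j⟩ : ↥F)) ⁻¹' {y} = {j : ℕ | r j = (y : ℕ)} := by
        ext j
        simp [Subtype.ext_iff]
      rw [← hset]
      exact Set.infinite_coe_iff.mp hy
    set B : Set (ℕ × ℕ) := {p : ℕ × ℕ | p.1 = (y : ℕ)} with hBdef
    have hBfin : {i : ℕ | ¬ {n : ℕ | (i, n) ∈ B}.Finite}.Finite := by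
      refine (Set.finite_singleton (y : ℕ)).subset ?_
      intro i hi
      simp only [Set.mem_setOf_eq] at hi
      by_contra hne
      apply hi
      have he : {n : ℕ | (i, n) ∈ B} = ∅ := by
        ext n
        simp only [hBdef, Set.mem_setOf_eq, Set.mem_empty_iff_false, iff_false]
        intro h
        exact hne (by simp [h])
      rw [he]; exact Set.finite_empty
    have hsubJ : {j : ℕ | r j = (y : ℕ)} ⊆
        {j : ℕ | (B ∩ {p : ℕ × ℕ | (f1 p).1 = j}).Infinite} := by
      intro j hj
      have h1 := hrInf j
      rw [hj] at h1
      refine Set.Infinite.mono ?_ h1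
      intro p hp
      exact ⟨hp.2, hp.1.2⟩
    exact hy' ((key1 B hBfin).subset hsubJ)
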